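/- Let G be a finite connected simple graph, let u be a vertex of G, and write N_i for the set of vertices at graph distance exactly i from u and N_{≥2} for the set of vertices at distance at least 2 from u. Let I be a maximum independent set of the induced subgraph G[N_{≥2}] which, among all maximum independent sets of G[N_{≥2}], minimizes the cardinality |I ∩ N_3|. Then for every vertex w ∈ I ∩ N_3 and every neighbour w' of w with w' ∈ N_2, the vertex w' has a neighbour belonging to I \ {w}. -/

import Mathlib

/-- Let `G` be a finite connected simple graph, `u` a vertex, and `I` a maximum
independent set of the subgraph induced on the vertices at distance at least `2`
from `u` which, among all such maximum independent sets, minimizes the number of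
its vertices at distance exactly `3` from `u`.  Then every vertex `w ∈ I` at
distance `3` from `u` and every neighbour `w'` of `w` at distance `2` from `u`
is such that `w'` has a neighbour in `I \ {w}`. -/
theorem stmt0 {V : Type*} [Fintype V] [DecidableEq V]
    (G : SimpleGraph V) (hG : G.Connected) (u : V)
    (I : Finset V)
    (hIsub : ∀ x ∈ I, 2 ≤ G.dist u x)
    (hIind : ∀ x ∈ I, ∀ y ∈ I, ¬ G.Adj x y)
    (hImax : ∀ J : Finset V, (∀ x ∈ J, 2 ≤ G.dist u x) →
      (∀ x ∈ J, ∀ y ∈ J, ¬ G.Adj x y) → J.card ≤ I.card)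
    (hImin : ∀ J : Finset V, (∀ x ∈ J, 2 ≤ G.dist u x) →
      (∀ x ∈ J, ∀ y ∈ J, ¬ G.Adj x y) → J.card = I.card →
      (I.filter (fun x => G.dist u x = 3)).card ≤
        (J.filter (fun x => G.dist u x = 3)).card)
    (w : V) (hwI : w ∈ I) (hw3 : G.dist u w = 3)
    (w' : V) (hadj : G.Adj w w') (hw'2 : G.dist u w' = 2) :
    ∃ z ∈ I, z ≠ w ∧ G.Adj w' z := by
  by_contra h
  push_neg at h
  -- w' ∉ I
  have hw'I : w' ∉ I := fun hw'I => hIind w hwI w' hw'I hadj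
  have hw'e : w' ∉ I.erase w := fun hh => hw'I (Finset.mem_of_mem_erase hh)
  have hJsub : ∀ x ∈ insert w' (I.erase w), 2 ≤ G.dist u x := by
    intro x hx
    rcases Finset.mem_insert.1 hx with rfl | hx
    · omega
    · exact hIsub x (Finset.mem_of_mem_erase hx)
  have hnoadj : ∀ y ∈ I.erase w, ¬ G.Adj w' y := by
    intro y hy hAdj
    exact (h y (Finset.mem_of_mem_erase hy) (Finset.ne_of_mem_erase hy)) hAdj
  have hJind : ∀ x ∈ insert w' (I.erase w), ∀ y ∈ insert w' (I.erase w),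
      ¬ G.Adj x y := by
    intro x hx y hy hAdj
    rcases Finset.mem_insert.1 hx with hx' | hx
    · rcases Finset.mem_insert.1 hy with hy' | hy
      · rw [hx', hy'] at hAdj; exact G.loopless.irrefl _ hAdj
      · rw [hx'] at hAdj; exact hnoadj y hy hAdj
    · rcases Finset.mem_insert.1 hy with hy' | hy
      · rw [hy'] at hAdj; exact hnoadj x hx hAdj.symm
      · exact hIind x (Finset.mem_of_mem_erase hx) y (Finset.mem_of_mem_erase hy) hAdj
  have hJcard : (insert w' (I.erase w)).card = I.card := by
    rw [Finset.card_insert_of_notMem hw'e, Finset.card_erase_of_mem hwI]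
    have : 1 ≤ I.card := Finset.card_pos.2 ⟨w, hwI⟩
    omega
  have key := hImin _ hJsub hJind hJcard
  -- compute the filter of the new set
  have hfil : (insert w' (I.erase w)).filter (fun x => G.dist u x = 3) =
      (I.filter (fun x => G.dist u x = 3)).erase w := by
    ext x
    simp only [Finset.mem_filter, Finset.mem_insert, Finset.mem_erase]
    constructor
    · rintro ⟨rfl | ⟨hxw, hxI⟩, hx3⟩
      · omega
      · exact ⟨hxw, hxI, hx3⟩
    · rintro ⟨hxw, hxI, hx3⟩
      exact ⟨Or.inr ⟨hxw, hxI⟩, hx3⟩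
  have hwfil : w ∈ I.filter (fun x => G.dist u x = 3) :=
    Finset.mem_filter.2 ⟨hwI, hw3⟩
  rw [hfil, Finset.card_erase_of_mem hwfil] at key
  have : 1 ≤ (I.filter (fun x => G.dist u x = 3)).card :=
    Finset.card_pos.2 ⟨w, hwfil⟩
  omega
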